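/- Let m > 0, Δ > 0 and let (S_n, 𝓕_n) be a martingale with K := sup_n sup_{p ≥ 2} |S_n|_p/p^{1/m} < ∞; let S be its almost sure limit and set γ_n = (E(S_n − S)²)^{1/2}. Then there exists a constant C = C(m, Δ, K) ∈ (0,∞) such that for every n with 0 < γ_n < 1/e: sup_{p ≥ 2} |S_n − S|_p/p^{Δ + 1/m} ≤ C·|log γ_n|^{−Δ}. -/

import Mathlib

open MeasureTheory Filter Set
open scoped ENNReal Topology

private lemma aux_exp (Δ t : ℝ) (hΔ : 0 < Δ) (ht : 0 < t) :
    t ^ Δ * Real.exp (-t) ≤ Δ ^ Δ * Real.exp (-Δ) := by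
  rw [Real.rpow_def_of_pos ht, Real.rpow_def_of_pos hΔ, ← Real.exp_add, ← Real.exp_add,
    Real.exp_le_exp]
  have h := Real.log_le_sub_one_of_pos (div_pos ht hΔ)
  rw [Real.log_div ht.ne' hΔ.ne'] at h
  have h2 := mul_le_mul_of_nonneg_right h hΔ.le
  rw [sub_mul, sub_mul, div_mul_cancel₀ t hΔ.ne', one_mul] at h2
  linarith

private lemma aux_key (m Δ K p γ : ℝ) (hm : 0 < m) (hΔ : 0 < Δ) (hK : 0 ≤ K)
    (hp : 2 ≤ p) (hγ0 : 0 < γ) (hγ1 : γ < Real.exp (-1)) :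
    γ ^ (1/p) * (2 * K * (2*p-2) ^ (1/m)) ^ ((p-1)/p) ≤
      (max 1 (2 * K * 2 ^ (1/m)) * (Δ ^ Δ * Real.exp (-Δ))) * |Real.log γ| ^ (-Δ) *
        p ^ (Δ + 1/m) := by
  have hp0 : (0:ℝ) < p := by linarith
  have hp1 : (1:ℝ) ≤ p := by linarith
  set D := max 1 (2 * K * 2 ^ (1/m)) with hD
  have hD1 : (1:ℝ) ≤ D := le_max_left _ _
  have hD0 : (0:ℝ) ≤ D := by linarith
  have hlog : Real.log γ < -1 := by
    have := Real.log_lt_log hγ0 hγ1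
    rwa [Real.log_exp] at this
  set L := -Real.log γ with hL
  have hL1 : (1:ℝ) < L := by simp only [hL]; linarith
  have habs : |Real.log γ| = L := abs_of_neg (by linarith)
  have hs0 : (0:ℝ) ≤ (p-1)/p := div_nonneg (by linarith) hp0.le
  have hs1 : (p-1)/p ≤ 1 := by rw [div_le_one hp0]; linarith
  -- Step A
  have hA1 : 2 * K * (2*p-2) ^ (1/m) ≤ 2 * K * 2 ^ (1/m) * p ^ (1/m) := by
    have h1 : (2*p-2:ℝ) ^ (1/m) ≤ (2*p) ^ (1/m) :=
      Real.rpow_le_rpow (by linarith) (by linarith) (by positivity)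
    have h2 : ((2:ℝ)*p) ^ (1/m) = 2 ^ (1/m) * p ^ (1/m) :=
      Real.mul_rpow (by norm_num) (by linarith)
    calc 2 * K * (2*p-2) ^ (1/m) ≤ 2 * K * (2*p) ^ (1/m) := by
          exact mul_le_mul_of_nonneg_left h1 (by positivity)
      _ = 2 * K * 2 ^ (1/m) * p ^ (1/m) := by rw [h2]; ring
  have hA : (2 * K * (2*p-2) ^ (1/m)) ^ ((p-1)/p) ≤ D * p ^ (1/m) := by
    calc (2 * K * (2*p-2) ^ (1/m)) ^ ((p-1)/p)
        ≤ (2 * K * 2 ^ (1/m) * p ^ (1/m)) ^ ((p-1)/p) :=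
          Real.rpow_le_rpow
            (mul_nonneg (by linarith) (Real.rpow_nonneg (by linarith) _)) hA1 hs0
      _ = (2 * K * 2 ^ (1/m)) ^ ((p-1)/p) * (p ^ (1/m)) ^ ((p-1)/p) :=
          Real.mul_rpow (by positivity) (by positivity)
      _ ≤ D * p ^ (1/m) := by
          have e1 : (2 * K * 2 ^ (1/m)) ^ ((p-1)/p) ≤ D := by
            calc (2 * K * 2 ^ (1/m)) ^ ((p-1)/p) ≤ D ^ ((p-1)/p) :=
                  Real.rpow_le_rpow (by positivity) (le_max_right _ _) hs0
              _ ≤ D ^ (1:ℝ) := Real.rpow_le_rpow_of_exponent_le hD1 hs1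
              _ = D := Real.rpow_one D
          have e2 : (p ^ (1/m)) ^ ((p-1)/p) ≤ p ^ (1/m) := by
            rw [← Real.rpow_mul hp0.le]
            exact Real.rpow_le_rpow_of_exponent_le hp1
              (mul_le_of_le_one_right (by positivity) hs1)
          exact mul_le_mul e1 e2 (by positivity) hD0
  -- Step B
  have ht : 0 < L / p := div_pos (by linarith) hp0
  have hγeq : γ ^ (1/p) = Real.exp (-(L/p)) := by
    rw [Real.rpow_def_of_pos hγ0]
    congr 1
    simp only [hL]
    ring
  have hB1 := aux_exp Δ (L/p) hΔ ht
  have hB2 : Real.exp (-(L/p)) ≤ Δ ^ Δ * Real.exp (-Δ) * (L/p) ^ (-Δ) := by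
    have hpow : (L/p) ^ (-Δ) * (L/p) ^ Δ = 1 := by
      rw [← Real.rpow_add ht]
      simp
    calc Real.exp (-(L/p)) = ((L/p) ^ (-Δ) * (L/p) ^ Δ) * Real.exp (-(L/p)) := by
          rw [hpow, one_mul]
      _ = (L/p) ^ (-Δ) * ((L/p) ^ Δ * Real.exp (-(L/p))) := by ring
      _ ≤ (L/p) ^ (-Δ) * (Δ ^ Δ * Real.exp (-Δ)) :=
          mul_le_mul_of_nonneg_left hB1 (Real.rpow_nonneg ht.le _)
      _ = _ := mul_comm _ _
  have hB3 : (L/p) ^ (-Δ) = L ^ (-Δ) * p ^ Δ := by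
    rw [div_eq_mul_inv, Real.mul_rpow (by linarith) (by positivity),
      Real.inv_rpow hp0.le, ← Real.rpow_neg hp0.le, neg_neg]
  -- combine
  calc γ ^ (1/p) * (2 * K * (2*p-2) ^ (1/m)) ^ ((p-1)/p)
      ≤ Real.exp (-(L/p)) * (D * p ^ (1/m)) := by
        rw [hγeq]
        exact mul_le_mul_of_nonneg_left hA (Real.exp_nonneg _)
    _ ≤ (Δ ^ Δ * Real.exp (-Δ) * (L ^ (-Δ) * p ^ Δ)) * (D * p ^ (1/m)) := by
        refine mul_le_mul_of_nonneg_right ?_ (by positivity)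
        rw [← hB3]; exact hB2
    _ = (D * (Δ ^ Δ * Real.exp (-Δ))) * |Real.log γ| ^ (-Δ) * p ^ (Δ + 1/m) := by
        rw [habs, Real.rpow_add hp0]
        ring

theorem stmt19 {Ω : Type*} [m0 : MeasurableSpace Ω] (μ : Measure Ω) [IsProbabilityMeasure μ]
    (ℱ : Filtration ℕ m0) (S : ℕ → Ω → ℝ) (hmart : Martingale S ℱ μ)
    (m Δ : ℝ) (hm : 0 < m) (hΔ : 0 < Δ)
    (hK : (⨆ n : ℕ, ⨆ p : {p : ℝ // 2 ≤ p},
      eLpNorm (S n) (ENNReal.ofReal (p : ℝ)) μ / ENNReal.ofReal ((p : ℝ) ^ (1/m))) < ⊤)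
    (Slim : Ω → ℝ)
    (hSlim : ∀ᵐ ω ∂μ, Filter.Tendsto (fun n => S n ω) Filter.atTop (𝓝 (Slim ω))) :
    ∃ C : ℝ, 0 < C ∧ ∀ n : ℕ,
      0 < (∫ ω, (S n ω - Slim ω) ^ 2 ∂μ) ^ ((1:ℝ)/2) →
      (∫ ω, (S n ω - Slim ω) ^ 2 ∂μ) ^ ((1:ℝ)/2) < Real.exp (-1) →
      (⨆ p : {p : ℝ // 2 ≤ p},
          eLpNorm (fun ω => S n ω - Slim ω) (ENNReal.ofReal (p : ℝ)) μ /
            ENNReal.ofReal ((p : ℝ) ^ (Δ + 1/m))) ≤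
        ENNReal.ofReal
          (C * |Real.log ((∫ ω, (S n ω - Slim ω) ^ 2 ∂μ) ^ ((1:ℝ)/2))| ^ (-Δ)) := by
  set Ke := (⨆ n : ℕ, ⨆ p : {p : ℝ // 2 ≤ p},
      eLpNorm (S n) (ENNReal.ofReal (p : ℝ)) μ / ENNReal.ofReal ((p : ℝ) ^ (1/m))) with hKedef
  set K := Ke.toReal with hKdef
  have hKeq : Ke = ENNReal.ofReal K := (ENNReal.ofReal_toReal hK.ne).symm
  have hK0 : (0:ℝ) ≤ K := ENNReal.toReal_nonneg
  have hmeas : ∀ n, AEStronglyMeasurable (S n) μ := fun n =>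
    ((hmart.stronglyAdapted n).mono (ℱ.le n)).aestronglyMeasurable
  have hSlimmeas : AEStronglyMeasurable Slim μ :=
    aestronglyMeasurable_of_tendsto_ae atTop hmeas hSlim
  have hSb : ∀ (n : ℕ) (p : ℝ), 2 ≤ p →
      eLpNorm (S n) (ENNReal.ofReal p) μ ≤ ENNReal.ofReal (K * p ^ (1/m)) := by
    intro n p hp
    have h1 : eLpNorm (S n) (ENNReal.ofReal p) μ / ENNReal.ofReal (p ^ (1/m)) ≤ Ke := by
      refine le_trans ?_ (le_iSup (fun n : ℕ => ⨆ q : {p : ℝ // 2 ≤ p},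
        eLpNorm (S n) (ENNReal.ofReal (q : ℝ)) μ / ENNReal.ofReal ((q : ℝ) ^ (1/m))) n)
      exact le_iSup (fun q : {p : ℝ // 2 ≤ p} =>
        eLpNorm (S n) (ENNReal.ofReal (q : ℝ)) μ / ENNReal.ofReal ((q : ℝ) ^ (1/m)))
        ⟨p, hp⟩
    have hd0 : ENNReal.ofReal (p ^ (1/m)) ≠ 0 := by
      rw [ne_eq, ENNReal.ofReal_eq_zero, not_le]
      positivity
    rw [ENNReal.div_le_iff hd0 ENNReal.ofReal_ne_top] at h1
    calc eLpNorm (S n) (ENNReal.ofReal p) μ ≤ Ke * ENNReal.ofReal (p ^ (1/m)) := h1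
      _ = ENNReal.ofReal (K * p ^ (1/m)) := by
          rw [hKeq, ← ENNReal.ofReal_mul hK0]
  have hSlimb : ∀ (p : ℝ), 2 ≤ p →
      eLpNorm Slim (ENNReal.ofReal p) μ ≤ ENNReal.ofReal (K * p ^ (1/m)) := by
    intro p hp
    refine le_trans (Lp.eLpNorm_lim_le_liminf_eLpNorm hmeas Slim hSlim) ?_
    calc atTop.liminf (fun n => eLpNorm (S n) (ENNReal.ofReal p) μ)
        ≤ atTop.liminf (fun _ : ℕ => ENNReal.ofReal (K * p ^ (1/m))) :=
          liminf_le_liminf (Eventually.of_forall fun n => hSb n p hp)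
      _ = _ := liminf_const _
  have hXmeas : ∀ n, AEStronglyMeasurable (fun ω => S n ω - Slim ω) μ := fun n =>
    (hmeas n).sub hSlimmeas
  have hXb : ∀ (n : ℕ) (p : ℝ), 2 ≤ p →
      eLpNorm (fun ω => S n ω - Slim ω) (ENNReal.ofReal p) μ ≤
        ENNReal.ofReal (2 * K * p ^ (1/m)) := by
    intro n p hp
    have h1 : (1:ℝ≥0∞) ≤ ENNReal.ofReal p := by
      rw [← ENNReal.ofReal_one]
      exact ENNReal.ofReal_le_ofReal (by linarith)
    have h2 := eLpNorm_sub_le (hmeas n) hSlimmeas h1 (μ := μ)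
    calc eLpNorm (fun ω => S n ω - Slim ω) (ENNReal.ofReal p) μ
        = eLpNorm (S n - Slim) (ENNReal.ofReal p) μ := rfl
      _ ≤ eLpNorm (S n) (ENNReal.ofReal p) μ + eLpNorm Slim (ENNReal.ofReal p) μ := h2
      _ ≤ ENNReal.ofReal (K * p ^ (1/m)) + ENNReal.ofReal (K * p ^ (1/m)) :=
          add_le_add (hSb n p hp) (hSlimb p hp)
      _ = ENNReal.ofReal (2 * K * p ^ (1/m)) := by
          rw [← ENNReal.ofReal_add (by positivity) (by positivity)]
          ring_nf
  have hCpos : 0 < max 1 (2 * K * 2 ^ (1/m)) * (Δ ^ Δ * Real.exp (-Δ)) := by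
    apply mul_pos (lt_of_lt_of_le one_pos (le_max_left _ _))
    positivity
  refine ⟨max 1 (2 * K * 2 ^ (1/m)) * (Δ ^ Δ * Real.exp (-Δ)), hCpos, ?_⟩
  intro n hγpos hγlt
  set γ := (∫ ω, (S n ω - Slim ω) ^ 2 ∂μ) ^ ((1:ℝ)/2) with hγdef
  set C := max 1 (2 * K * 2 ^ (1/m)) * (Δ ^ Δ * Real.exp (-Δ)) with hCdef
  -- Memℒp at 2
  have hmem2 : MemLp (fun ω => S n ω - Slim ω) 2 μ := by
    refine ⟨hXmeas n, ?_⟩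
    have := hXb n 2 le_rfl
    rw [ENNReal.ofReal_ofNat] at this
    exact lt_of_le_of_lt this ENNReal.ofReal_lt_top
  have h2γ : eLpNorm (fun ω => S n ω - Slim ω) 2 μ = ENNReal.ofReal γ := by
    rw [hmem2.eLpNorm_eq_integral_rpow_norm two_ne_zero ENNReal.ofNat_ne_top]
    congr 1
    rw [hγdef]
    have hpt : ∀ a : Ω, ‖S n a - Slim a‖ ^ (ENNReal.toReal 2) = (S n a - Slim a) ^ 2 := by
      intro a
      rw [ENNReal.toReal_ofNat, show ((2:ℝ)) = ((2:ℕ):ℝ) by norm_num, Real.rpow_natCast,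
        Real.norm_eq_abs, sq_abs]
    simp_rw [hpt]
    rw [ENNReal.toReal_ofNat]
    norm_num
  refine iSup_le fun q => ?_
  obtain ⟨p, hp⟩ := q
  simp only
  have hp0 : (0:ℝ) < p := by linarith
  have hd0 : ENNReal.ofReal (p ^ (Δ + 1/m)) ≠ 0 := by
    rw [ne_eq, ENNReal.ofReal_eq_zero, not_le]
    positivity
  rw [ENNReal.div_le_iff hd0 ENNReal.ofReal_ne_top]
  -- Cauchy-Schwarz step
  set F := fun ω => ((‖S n ω - Slim ω‖₊ : ℝ≥0∞)) with hFdef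
  have hF : AEMeasurable F μ := (hXmeas n).enorm
  have hq2 : (2:ℝ) ≤ 2*p - 2 := by linarith
  have step1 : eLpNorm (fun ω => S n ω - Slim ω) (ENNReal.ofReal p) μ =
      (∫⁻ ω, F ω ^ p ∂μ) ^ (1/p) := by
    rw [eLpNorm_eq_lintegral_rpow_enorm_toReal (by rw [ne_eq, ENNReal.ofReal_eq_zero, not_le]; linarith)
      ENNReal.ofReal_ne_top, ENNReal.toReal_ofReal (by linarith)]
    rfl
  have step2 : (∫⁻ ω, F ω ^ p ∂μ) ≤
      (∫⁻ ω, F ω ^ (2:ℝ) ∂μ) ^ (1/(2:ℝ)) *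
      (∫⁻ ω, (F ω ^ (p-1)) ^ (2:ℝ) ∂μ) ^ (1/(2:ℝ)) := by
    have hconj : Real.HolderConjugate 2 2 := Real.holderConjugate_iff.mpr ⟨one_lt_two, by norm_num⟩
    have h := ENNReal.lintegral_mul_le_Lp_mul_Lq μ hconj hF (hF.pow_const (p-1))
    refine le_trans (le_of_eq ?_) h
    refine lintegral_congr fun ω => ?_
    show F ω ^ p = (F * fun ω => F ω ^ (p-1)) ω
    simp only [Pi.mul_apply]
    calc F ω ^ p = F ω ^ (1 + (p-1)) := by ring_nf
      _ = F ω ^ (1:ℝ) * F ω ^ (p-1) :=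
          ENNReal.rpow_add_of_nonneg _ _ zero_le_one (by linarith)
      _ = F ω * F ω ^ (p-1) := by rw [ENNReal.rpow_one]
  have step3 : (∫⁻ ω, F ω ^ (2:ℝ) ∂μ) ^ (1/(2:ℝ)) =
      eLpNorm (fun ω => S n ω - Slim ω) 2 μ := by
    rw [eLpNorm_eq_lintegral_rpow_enorm_toReal (two_ne_zero) ENNReal.ofNat_ne_top, ENNReal.toReal_ofNat]
    rfl
  have step4 : (∫⁻ ω, (F ω ^ (p-1)) ^ (2:ℝ) ∂μ) ^ (1/(2:ℝ)) =
      (eLpNorm (fun ω => S n ω - Slim ω) (ENNReal.ofReal (2*p-2)) μ) ^ (p-1) := by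
    have e1 : ∀ ω, (F ω ^ (p-1)) ^ (2:ℝ) = F ω ^ (2*p-2) := by
      intro ω
      rw [← ENNReal.rpow_mul]
      congr 1
      ring
    simp_rw [e1]
    rw [eLpNorm_eq_lintegral_rpow_enorm_toReal (by rw [ne_eq, ENNReal.ofReal_eq_zero, not_le]; linarith)
      ENNReal.ofReal_ne_top, ENNReal.toReal_ofReal (by linarith)]
    rw [← ENNReal.rpow_mul]
    congr 1
    have hp1' : p - 1 ≠ 0 := by linarith
    have hp2' : 2 * p - 2 ≠ 0 := by linarith
    field_simp
  have hCS : eLpNorm (fun ω => S n ω - Slim ω) (ENNReal.ofReal p) μ ≤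
      ENNReal.ofReal γ ^ (1/p) *
        ENNReal.ofReal (2 * K * (2*p-2) ^ (1/m)) ^ ((p-1) * (1/p)) := by
    rw [step1]
    calc (∫⁻ ω, F ω ^ p ∂μ) ^ (1/p)
        ≤ ((∫⁻ ω, F ω ^ (2:ℝ) ∂μ) ^ (1/(2:ℝ)) *
            (∫⁻ ω, (F ω ^ (p-1)) ^ (2:ℝ) ∂μ) ^ (1/(2:ℝ))) ^ (1/p) :=
          ENNReal.rpow_le_rpow step2 (by positivity)
      _ = (ENNReal.ofReal γ *
            (eLpNorm (fun ω => S n ω - Slim ω) (ENNReal.ofReal (2*p-2)) μ) ^ (p-1)) ^ (1/p) := by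
          rw [step3, step4, h2γ]
      _ ≤ (ENNReal.ofReal γ *
            (ENNReal.ofReal (2 * K * (2*p-2) ^ (1/m))) ^ (p-1)) ^ (1/p) := by
          refine ENNReal.rpow_le_rpow ?_ (by positivity)
          exact mul_le_mul_right (ENNReal.rpow_le_rpow (hXb n (2*p-2) hq2) (by linarith)) _
      _ = ENNReal.ofReal γ ^ (1/p) *
            ENNReal.ofReal (2 * K * (2*p-2) ^ (1/m)) ^ ((p-1) * (1/p)) := by
          rw [ENNReal.mul_rpow_of_nonneg _ _ (by positivity), ← ENNReal.rpow_mul]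
  refine le_trans hCS ?_
  have hof : ENNReal.ofReal γ ^ (1/p) *
      ENNReal.ofReal (2 * K * (2*p-2) ^ (1/m)) ^ ((p-1) * (1/p)) =
      ENNReal.ofReal (γ ^ (1/p) * (2 * K * (2*p-2) ^ (1/m)) ^ ((p-1)/p)) := by
    have hb0 : (0:ℝ) ≤ 2 * K * (2*p-2) ^ (1/m) :=
      mul_nonneg (by linarith) (Real.rpow_nonneg (by linarith) _)
    have he0 : (0:ℝ) ≤ (p-1) * (1/p) :=
      mul_nonneg (by linarith) (by positivity)
    rw [ENNReal.ofReal_rpow_of_nonneg hγpos.le (by positivity),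
      ENNReal.ofReal_rpow_of_nonneg hb0 he0,
      ← ENNReal.ofReal_mul (Real.rpow_nonneg hγpos.le _)]
    congr 2
    ring
  rw [hof, ← ENNReal.ofReal_mul (mul_nonneg hCpos.le (Real.rpow_nonneg (abs_nonneg _) _))]
  refine ENNReal.ofReal_le_ofReal ?_
  calc γ ^ (1/p) * (2 * K * (2*p-2) ^ (1/m)) ^ ((p-1)/p)
      ≤ C * |Real.log γ| ^ (-Δ) * p ^ (Δ + 1/m) :=
        aux_key m Δ K p γ hm hΔ hK0 hp hγpos hγlt
    _ = C * |Real.log γ| ^ (-Δ) * p ^ (Δ + 1/m) := rfl
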